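/- Let n ≥ 1 and A ∈ ℝ^{n×n}. Then the following are equivalent: (i) there exists a permutation σ of {1,…,n} such that the permuted matrix à with Ã_{ij} = A_{σ(i)σ(j)} is lower triangular (Ã_{ij} = 0 whenever i < j); (ii) the directed graph on vertices {1,…,n} with an edge i → j whenever i ≠ j and A_{ij} ≠ 0 has no cycles other than loops; equivalently, the relation R defined by R(i,j) ↔ (i ≠ j ∧ A_{ij} ≠ 0) has irreflexive transitive closure. In particular, a GARK scheme with tableau A is implicit-implicit (IMIM) exactly when all cycles of its stage-dependency graph are loops. -/

import Mathlib

open Matrix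

/-- A matrix can be symmetrically permuted to lower triangular form
(`Ã_{ij} = A_{σ(i)σ(j)} = 0` for `i < j`) if and only if the directed stage-dependency
graph (with an edge `i → j` whenever `i ≠ j` and `A_{ij} ≠ 0`) has no cycles other than
loops; equivalently, the relation `R i j ↔ (i ≠ j ∧ A_{ij} ≠ 0)` has an irreflexive
transitive closure.  This characterizes implicit-implicit (IMIM) GARK schemes. -/
theorem imim_iff_dependency_graph_loops_only (n : ℕ) (hn : 1 ≤ n)
    (A : Matrix (Fin n) (Fin n) ℝ) :
    (∃ σ : Equiv.Perm (Fin n), ∀ i j : Fin n, i < j → A (σ i) (σ j) = 0) ↔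
      (∀ i : Fin n,
        ¬ Relation.TransGen (fun i j : Fin n => i ≠ j ∧ A i j ≠ 0) i i) := by
  constructor
  · rintro ⟨σ, hσ⟩ i hi
    have step : ∀ a b : Fin n, (a ≠ b ∧ A a b ≠ 0) → σ.symm b < σ.symm a := by
      intro a b h
      rcases h with ⟨hne, hA⟩
      rcases lt_trichotomy (σ.symm a) (σ.symm b) with hlt | heq | hgt
      · exfalso
        have := hσ _ _ hlt
        simp only [Equiv.apply_symm_apply] at this
        exact hA this
      · exact absurd (σ.symm.injective heq) hne
      · exact hgt
    have key : ∀ a b : Fin n, Relation.TransGen (fun i j : Fin n => i ≠ j ∧ A i j ≠ 0) a b →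
        σ.symm b < σ.symm a := by
      intro a b h
      induction h with
      | single h => exact step _ _ h
      | tail _ h ih => exact lt_trans (step _ _ h) ih
    exact lt_irrefl _ (key i i hi)
  · intro hirr
    set R : Fin n → Fin n → Prop := fun i j => i ≠ j ∧ A i j ≠ 0 with hR
    set R' : Fin n → Fin n → Prop := fun i j => R j i with hR'
    have hirr' : ∀ i : Fin n, ¬ Relation.TransGen R' i i := by
      intro i hi
      exact hirr i ((Relation.transGen_swap).1 hi)
    have hpo : IsPartialOrder (Fin n) (Relation.ReflTransGen R') :=
      { refl := fun a => Relation.ReflTransGen.refl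
        trans := fun a b c hab hbc => hab.trans hbc
        antisymm := by
          intro a b hab hba
          by_contra hne
          rcases (Relation.reflTransGen_iff_eq_or_transGen.1 hab) with h | h
          · exact hne h.symm
          rcases (Relation.reflTransGen_iff_eq_or_transGen.1 hba) with h' | h'
          · exact hne h'
          exact hirr' a (h.trans h') }
    obtain ⟨s, hs, hsub⟩ := @extend_partialOrder (Fin n) _ hpo
    classical
    have htrans : ∀ a b c : Fin n, s a b → s b c → s a c := fun a b c =>
      hs.toIsPartialOrder.toIsPreorder.toIsTrans.trans a b c
    have hanti : ∀ a b : Fin n, s a b → s b a → a = b := fun a b =>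
      hs.toIsPartialOrder.toAntisymm.antisymm a b
    have htot : ∀ a b : Fin n, s a b ∨ s b a := fun a b => hs.toTotal.total a b
    set t : Fin n → Fin n → Prop := fun a b => s a b ∧ a ≠ b with ht
    haveI hsto : IsStrictTotalOrder (Fin n) t :=
      { trichotomous := by
          intro a b
          by_cases hab : a = b
          · exact fun _ _ => hab
          rcases htot a b with h | h
          · exact fun h1 _ => (h1 ⟨h, hab⟩).elim
          · exact fun _ h2 => (h2 ⟨h, Ne.symm hab⟩).elim
        irrefl := fun a h => h.2 rfl
        trans := by
          rintro a b c ⟨hab, hne⟩ ⟨hbc, hne'⟩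
          refine ⟨htrans _ _ _ hab hbc, ?_⟩
          rintro rfl
          exact hne (hanti _ _ hab hbc) }
    haveI : DecidableRel t := fun a b => Classical.dec _
    letI L : LinearOrder (Fin n) := linearOrderOfSTO t
    let e := @Fintype.orderIsoFinOfCardEq (Fin n) L _ n (Fintype.card_fin n)
    refine ⟨e.toEquiv, ?_⟩
    intro i j hij
    by_contra hA
    have hne : e i ≠ e j := fun h => absurd (e.toEquiv.injective h) (ne_of_lt hij)
    have hRij : R (e i) (e j) := ⟨hne, hA⟩
    have h1 : s (e j) (e i) := hsub _ _ (Relation.ReflTransGen.single hRij)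
    have h2 : e i = e j ∨ t (e i) (e j) := (@OrderIso.le_iff_le (Fin n) (Fin n) _ L.toLE e i j).mpr (le_of_lt hij)
    rcases h2 with h | h
    · exact hne h
    · exact hne (hanti _ _ h.1 h1)
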